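/- Let H = (V,E,w) be an edge-weighted hypergraph, let 2 ≤ k ≤ |V|, let f_1, …, f_{k−1} be a sequence of procedural minimizers, and let γ_k := inf{ D_w(f) : f ≠ 0, f ⊥_w f_1, …, f_{k−1} }. Then γ_k ≤ ζ_k. -/

import Mathlib

open Finset

/-- An edge-weighted hypergraph on a finite vertex set `V`: a finite set of hyperedges,
each a nonempty subset of `V`, with positive weights. -/
structure EWHypergraph (V : Type*) [Fintype V] [DecidableEq V] where
  E : Finset (Finset V)
  w : Finset V → ℝ
  edge_nonempty : ∀ e ∈ E, e.Nonempty
  w_pos : ∀ e ∈ E, 0 < w e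

namespace EWHypergraph

variable {V : Type*} [Fintype V] [DecidableEq V]

/-- The weight of a vertex: total weight of hyperedges containing it. -/
noncomputable def wv (H : EWHypergraph V) (v : V) : ℝ :=
  ∑ e ∈ H.E.filter (fun e => v ∈ e), H.w e

/-- The weight of a set of vertices. -/
noncomputable def wS (H : EWHypergraph V) (S : Finset V) : ℝ := ∑ v ∈ S, H.wv v

/-- The boundary of `S`: hyperedges meeting both `S` and its complement. -/
noncomputable def bdry (H : EWHypergraph V) (S : Finset V) : Finset (Finset V) :=
  H.E.filter (fun e => (e ∩ S).Nonempty ∧ (e \ S).Nonempty)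

/-- The expansion `φ(S)` of a set of vertices. -/
noncomputable def phi (H : EWHypergraph V) (S : Finset V) : ℝ :=
  (∑ e ∈ H.bdry S, H.w e) / H.wS S

/-- `max_{u,v ∈ e} (f u - f v)^2`. -/
noncomputable def edgeDisc (H : EWHypergraph V) (f : V → ℝ) (e : Finset V) : ℝ :=
  sSup {x : ℝ | ∃ u ∈ e, ∃ v ∈ e, (f u - f v) ^ 2 = x}

/-- The discrepancy ratio `D_w(f)`. -/
noncomputable def disc (H : EWHypergraph V) (f : V → ℝ) : ℝ :=
  (∑ e ∈ H.E, H.w e * H.edgeDisc f e) / ∑ u : V, H.wv u * f u ^ 2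

/-- The weighted inner product `⟨f,g⟩_w`. -/
noncomputable def wip (H : EWHypergraph V) (f g : V → ℝ) : ℝ :=
  ∑ u : V, H.wv u * f u * g u

/-- `γ₂`: infimum of the discrepancy ratio over nonzero `f ⊥_w 1`. -/
noncomputable def gamma2 (H : EWHypergraph V) : ℝ :=
  sInf {x : ℝ | ∃ f : V → ℝ, f ≠ 0 ∧ H.wip f (fun _ => 1) = 0 ∧ H.disc f = x}

/-- The hypergraph expansion `φ_H`. -/
noncomputable def phiH (H : EWHypergraph V) : ℝ :=
  sInf {x : ℝ | ∃ S : Finset V, S.Nonempty ∧ S ≠ univ ∧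
    x = max (H.phi S) (H.phi Sᶜ)}

/-- `ζ_k`: inf over `k`-tuples of nonzero pairwise `w`-orthogonal vectors of the
sup of the discrepancy ratio over nonzero vectors in their span. -/
noncomputable def zeta (H : EWHypergraph V) (k : ℕ) : ℝ :=
  sInf {x : ℝ | ∃ f : Fin k → V → ℝ, (∀ i, f i ≠ 0) ∧
    (∀ i j, i ≠ j → H.wip (f i) (f j) = 0) ∧
    x = sSup {y : ℝ | ∃ h : V → ℝ, h ≠ 0 ∧
      h ∈ Submodule.span ℝ (Set.range f) ∧ H.disc h = y}}

/-- `ξ_k`: inf over `k`-tuples of nonzero pairwise `w`-orthogonal vectors of the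
maximum discrepancy ratio among them. -/
noncomputable def xi (H : EWHypergraph V) (k : ℕ) : ℝ :=
  sInf {x : ℝ | ∃ f : Fin k → V → ℝ, (∀ i, f i ≠ 0) ∧
    (∀ i j, i ≠ j → H.wip (f i) (f j) = 0) ∧
    x = sSup {y : ℝ | ∃ i, H.disc (f i) = y}}

/-- A sequence of procedural minimizers: `f 0` is a nonzero constant vector, each `f i`
is nonzero and `w`-orthogonal to the previous ones, and attains the infimum of the
discrepancy ratio over nonzero vectors `w`-orthogonal to the previous ones. -/
def IsProcMin (H : EWHypergraph V) {k : ℕ} (f : Fin k → V → ℝ) : Prop :=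
  (∀ i, f i ≠ 0) ∧
  (∀ i : Fin k, (i : ℕ) = 0 → ∃ c : ℝ, f i = fun _ => c) ∧
  (∀ i j : Fin k, (j : ℕ) < (i : ℕ) → H.wip (f i) (f j) = 0) ∧
  (∀ i : Fin k, 0 < (i : ℕ) → H.disc (f i) =
    sInf {x : ℝ | ∃ g : V → ℝ, g ≠ 0 ∧
      (∀ j : Fin k, (j : ℕ) < (i : ℕ) → H.wip g (f j) = 0) ∧ H.disc g = x})

end EWHypergraph

namespace EWHypergraph

variable {V : Type*} [Fintype V] [DecidableEq V]

lemma edgeDisc_bddAbove (H : EWHypergraph V) (f : V → ℝ) (e : Finset V) :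
    BddAbove {x : ℝ | ∃ u ∈ e, ∃ v ∈ e, (f u - f v) ^ 2 = x} := by
  apply Set.Finite.bddAbove
  apply Set.Finite.subset (Set.finite_range (fun p : e × e => (f p.1 - f p.2) ^ 2))
  rintro x ⟨u, hu, v, hv, rfl⟩
  exact ⟨(⟨u, hu⟩, ⟨v, hv⟩), rfl⟩

lemma edgeDisc_nonneg (H : EWHypergraph V) (f : V → ℝ) {e : Finset V} (he : e.Nonempty) :
    0 ≤ H.edgeDisc f e := by
  obtain ⟨u, hu⟩ := he
  simp only [edgeDisc]
  exact le_csSup (H.edgeDisc_bddAbove f e) ⟨u, hu, u, hu, by ring⟩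

lemma edgeDisc_le (H : EWHypergraph V) (f : V → ℝ) {e : Finset V} (he : e.Nonempty) :
    H.edgeDisc f e ≤ 4 * ∑ u : V, f u ^ 2 := by
  obtain ⟨u0, hu0⟩ := he
  simp only [edgeDisc]
  apply csSup_le
  · exact ⟨0, u0, hu0, u0, hu0, by ring⟩
  rintro x ⟨u, hu, v, hv, rfl⟩
  have h1 : f u ^ 2 ≤ ∑ w : V, f w ^ 2 :=
    Finset.single_le_sum (fun w _ => sq_nonneg (f w)) (mem_univ u)
  have h2 : f v ^ 2 ≤ ∑ w : V, f w ^ 2 :=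
    Finset.single_le_sum (fun w _ => sq_nonneg (f w)) (mem_univ v)
  nlinarith [sq_nonneg (f u + f v)]

lemma exists_ne_zero {f : V → ℝ} (hf : f ≠ 0) : ∃ u, f u ≠ 0 := by
  by_contra h
  push_neg at h
  exact hf (funext h)

lemma sumsq_pos {f : V → ℝ} (hf : f ≠ 0) : 0 < ∑ u : V, f u ^ 2 := by
  obtain ⟨u, hu⟩ := exists_ne_zero hf
  exact Finset.sum_pos' (fun w _ => sq_nonneg (f w)) ⟨u, mem_univ u, by positivity⟩

lemma disc_nonneg (H : EWHypergraph V) (hw : ∀ v : V, 0 < H.wv v) (f : V → ℝ) :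
    0 ≤ H.disc f := by
  apply div_nonneg
  · exact Finset.sum_nonneg fun e he =>
      mul_nonneg (H.w_pos e he).le (H.edgeDisc_nonneg f (H.edge_nonempty e he))
  · exact Finset.sum_nonneg fun u _ => by have := hw u; positivity

lemma disc_le (H : EWHypergraph V) (hw : ∀ v : V, 0 < H.wv v) (hV : (univ : Finset V).Nonempty)
    {f : V → ℝ} (hf : f ≠ 0) :
    H.disc f ≤ 4 * (∑ e ∈ H.E, H.w e) / (univ.inf' hV H.wv) := by
  set m := univ.inf' hV H.wv with hm
  have hmpos : 0 < m := by
    rw [hm, Finset.lt_inf'_iff]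
    exact fun u _ => hw u
  set S2 := ∑ u : V, f u ^ 2 with hS2
  have hS2pos : (0:ℝ) < S2 := sumsq_pos hf
  have hW : 0 ≤ ∑ e ∈ H.E, H.w e := Finset.sum_nonneg fun e he => (H.w_pos e he).le
  have hnum : ∑ e ∈ H.E, H.w e * H.edgeDisc f e ≤ (∑ e ∈ H.E, H.w e) * (4 * S2) := by
    rw [Finset.sum_mul]
    exact Finset.sum_le_sum fun e he =>
      mul_le_mul_of_nonneg_left (H.edgeDisc_le f (H.edge_nonempty e he)) (H.w_pos e he).le
  have hden : m * S2 ≤ ∑ u : V, H.wv u * f u ^ 2 := by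
    rw [hS2, Finset.mul_sum]
    exact Finset.sum_le_sum fun u _ =>
      mul_le_mul_of_nonneg_right (Finset.inf'_le _ (mem_univ u)) (sq_nonneg _)
  have key : H.disc f ≤ ((∑ e ∈ H.E, H.w e) * (4 * S2)) / (m * S2) :=
    div_le_div₀ (by positivity) hnum (by positivity) hden
  calc H.disc f ≤ ((∑ e ∈ H.E, H.w e) * (4 * S2)) / (m * S2) := key
    _ = 4 * (∑ e ∈ H.E, H.w e) / m := by field_simp

lemma wip_self_pos (H : EWHypergraph V) (hw : ∀ v : V, 0 < H.wv v) {f : V → ℝ} (hf : f ≠ 0) :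
    0 < H.wip f f := by
  obtain ⟨u, hu⟩ := exists_ne_zero hf
  exact Finset.sum_pos'
    (fun v _ => by rw [mul_assoc]; exact mul_nonneg (hw v).le (mul_self_nonneg _))
    ⟨u, mem_univ u, by
      rw [mul_assoc]; exact mul_pos (hw u) (mul_self_pos.mpr hu)⟩

lemma lin_indep (H : EWHypergraph V) (hw : ∀ v : V, 0 < H.wv v) {n : ℕ} {g : Fin n → V → ℝ}
    (hg0 : ∀ i, g i ≠ 0) (horth : ∀ i j, i ≠ j → H.wip (g i) (g j) = 0) :
    LinearIndependent ℝ g := by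
  rw [Fintype.linearIndependent_iff]
  intro c hc j
  have h0 : H.wip (∑ i, c i • g i) (g j) = 0 := by rw [hc]; simp [wip]
  have hlin : H.wip (∑ i, c i • g i) (g j) = ∑ i, c i * H.wip (g i) (g j) := by
    simp only [wip, Finset.sum_apply, Pi.smul_apply, smul_eq_mul]
    have h1 : ∀ u, (H.wv u * ∑ i, c i * g i u) * g j u
        = ∑ i, c i * (H.wv u * g i u * g j u) := by
      intro u
      rw [Finset.mul_sum, Finset.sum_mul]
      congr 1; ext i; ring
    simp_rw [h1, Finset.mul_sum]
    exact Finset.sum_comm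
  rw [hlin, Finset.sum_eq_single j (fun i _ hij => by rw [horth i j hij, mul_zero])
    (fun h => absurd (mem_univ j) h)] at h0
  have := H.wip_self_pos hw (hg0 j)
  exact by nlinarith

/-- The weighted inner product with a fixed family, as a linear map. -/
noncomputable def wipMap (H : EWHypergraph V) {n : ℕ} (f : Fin n → V → ℝ) :
    (V → ℝ) →ₗ[ℝ] (Fin n → ℝ) where
  toFun g := fun j => H.wip g (f j)
  map_add' a b := by
    ext j
    simp only [wip, Pi.add_apply]
    rw [← Finset.sum_add_distrib]
    congr 1; ext u; ring
  map_smul' c a := by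
    ext j
    simp only [wip, Pi.smul_apply, smul_eq_mul, RingHom.id_apply]
    rw [Finset.mul_sum]
    congr 1; ext u; ring

end EWHypergraph

/-- For procedural minimizers `f_1, …, f_{k-1}` and
`γ_k := inf { D_w(g) : g ≠ 0, g ⊥_w f_1, …, f_{k−1} }`, we have `γ_k ≤ ζ_k`. -/
theorem procedural_gamma_le_zeta {V : Type*} [Fintype V] [DecidableEq V]
    (H : EWHypergraph V) (hw : ∀ v : V, 0 < H.wv v)
    (k : ℕ) (hk1 : 2 ≤ k) (hk2 : k ≤ Fintype.card V)
    (f : Fin (k - 1) → V → ℝ) (hf : H.IsProcMin f) :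
    sInf {x : ℝ | ∃ g : V → ℝ, g ≠ 0 ∧
        (∀ j : Fin (k - 1), H.wip g (f j) = 0) ∧ H.disc g = x} ≤
      H.zeta k := by
  classical
  have hVcard : 0 < Fintype.card V := lt_of_lt_of_le (by omega) hk2
  have hV : (univ : Finset V).Nonempty :=
    Finset.univ_nonempty_iff.mpr (Fintype.card_pos_iff.mp hVcard)
  set C : ℝ := 4 * (∑ e ∈ H.E, H.w e) / (univ.inf' hV H.wv) with hC
  set S : Set ℝ := {x : ℝ | ∃ g : V → ℝ, g ≠ 0 ∧
      (∀ j : Fin (k - 1), H.wip g (f j) = 0) ∧ H.disc g = x} with hS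
  -- The defining set of ζ_k is nonempty: take indicators of k distinct vertices.
  obtain ⟨ι⟩ : Nonempty (Fin k ↪ V) :=
    Function.Embedding.nonempty_iff_card_le.mpr (by simpa using hk2)
  set f0 : Fin k → V → ℝ := fun i u => if u = ι i then 1 else 0 with hf0
  have hf0ne : ∀ i, f0 i ≠ 0 := by
    intro i h
    have := congr_fun h (ι i)
    simp [f0] at this
  have hf0orth : ∀ i j, i ≠ j → H.wip (f0 i) (f0 j) = 0 := by
    intro i j hij
    apply Finset.sum_eq_zero
    intro u _
    simp only [f0]
    by_cases h1 : u = ι i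
    · have h2 : u ≠ ι j := fun h2 => hij (ι.injective (h1.symm.trans h2))
      simp only [h1, if_pos rfl, if_neg (h1 ▸ h2), mul_zero]
    · simp [h1]
  have hZne : Set.Nonempty {x : ℝ | ∃ g : Fin k → V → ℝ, (∀ i, g i ≠ 0) ∧
      (∀ i j, i ≠ j → H.wip (g i) (g j) = 0) ∧
      x = sSup {y : ℝ | ∃ h : V → ℝ, h ≠ 0 ∧
        h ∈ Submodule.span ℝ (Set.range g) ∧ H.disc h = y}} :=
    ⟨_, f0, hf0ne, hf0orth, rfl⟩
  simp only [EWHypergraph.zeta]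
  apply le_csInf hZne
  rintro x ⟨g, hg0, hgorth, rfl⟩
  -- find a nonzero h₀ in the span of g that is orthogonal to all f j
  have hli : LinearIndependent ℝ g := H.lin_indep hw hg0 hgorth
  set W := Submodule.span ℝ (Set.range g) with hW
  have hrank : Module.finrank ℝ W = k := by
    rw [hW, finrank_span_eq_card hli, Fintype.card_fin]
  set T := (H.wipMap f).comp W.subtype with hT
  have hker : LinearMap.ker T ≠ ⊥ := by
    intro hbot
    have hinj : Function.Injective T := LinearMap.ker_eq_bot.mp hbot
    have hle := LinearMap.finrank_le_finrank_of_injective hinj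
    rw [hrank, Module.finrank_fintype_fun_eq_card, Fintype.card_fin] at hle
    omega
  obtain ⟨h0, hh0k, hh0ne⟩ := (Submodule.ne_bot_iff _).mp hker
  have hh0mem : (h0 : V → ℝ) ∈ W := h0.2
  have hh0ne' : (h0 : V → ℝ) ≠ 0 := fun h => hh0ne (Subtype.ext h)
  have hTz : T h0 = 0 := LinearMap.mem_ker.mp hh0k
  have horth0 : ∀ j : Fin (k - 1), H.wip (h0 : V → ℝ) (f j) = 0 := fun j =>
    congr_fun hTz j
  have hSb : BddBelow S := by
    refine ⟨0, ?_⟩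
    rintro y ⟨g', _, _, rfl⟩
    exact H.disc_nonneg hw g'
  have hmemS : H.disc (h0 : V → ℝ) ∈ S := ⟨(h0 : V → ℝ), hh0ne', horth0, rfl⟩
  have step1 : sInf S ≤ H.disc (h0 : V → ℝ) := csInf_le hSb hmemS
  have hYb : BddAbove {y : ℝ | ∃ h : V → ℝ, h ≠ 0 ∧
      h ∈ Submodule.span ℝ (Set.range g) ∧ H.disc h = y} := by
    refine ⟨C, ?_⟩
    rintro y ⟨h, hne, _, rfl⟩
    exact H.disc_le hw hV hne
  have hmemY : H.disc (h0 : V → ℝ) ∈ {y : ℝ | ∃ h : V → ℝ, h ≠ 0 ∧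
      h ∈ Submodule.span ℝ (Set.range g) ∧ H.disc h = y} :=
    ⟨(h0 : V → ℝ), hh0ne', hh0mem, rfl⟩
  exact step1.trans (le_csSup hYb hmemY)
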